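/- Let p be a prime with p ≡ 3 (mod 4) and let u_p be the Björck sequence of length p. Then u_p is a CAZAC sequence: |u_p[k]| = 1 for all k ∈ ℤ/pℤ, and (1/p) ∑_{k=0}^{p-1} u_p[m+k] · conj(u_p[k]) = 0 for all m ∈ ℤ/pℤ \ {0}. -/

import Mathlib

open scoped BigOperators Classical

noncomputable section

/-- The Legendre symbol modulo `p`, viewed as a complex-valued function on `ZMod p`:
`1` on nonzero quadratic residues, `0` at `0`, `-1` on quadratic nonresidues. -/
def chi (p : ℕ) (k : ZMod p) : ℂ :=
  if k = 0 then 0 else if ∃ m : ZMod p, m ^ 2 = k then 1 else -1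

/-- The Legendre symbol modulo `p`, viewed as an integer-valued function on `ZMod p`. -/
def chiZ (p : ℕ) (k : ZMod p) : ℤ :=
  if k = 0 then 0 else if ∃ m : ZMod p, m ^ 2 = k then 1 else -1

/-- The discrete periodic (narrow band) ambiguity function
`A_p(u)[m,n] = (1/p) ∑_k u[k+m] conj(u[k]) e^{-2πi k n/p}`. -/
def ambig (p : ℕ) [NeZero p] (u : ZMod p → ℂ) (m n : ZMod p) : ℂ :=
  (1 / (p : ℂ)) * ∑ k : ZMod p,
    u (k + m) * (starRingEnd ℂ) (u k) *
      Complex.exp (-2 * Real.pi * Complex.I * (k.val : ℂ) * (n.val : ℂ) / (p : ℂ))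

/-- The Kloosterman sum `K[a,b;p] = ∑_{x ∈ (ℤ/pℤ)ˣ} e^{2πi(ax + b x⁻¹)/p}`. -/
def kloost (p : ℕ) [NeZero p] (a b : ℤ) : ℂ :=
  ∑ x : (ZMod p)ˣ,
    Complex.exp (2 * Real.pi * Complex.I *
      ((((a : ZMod p) * (x : ZMod p) + (b : ZMod p) * ((x⁻¹ : (ZMod p)ˣ) : ZMod p)).val : ℂ))
        / (p : ℂ))

/-- The Björck sequence of length `p` for a prime `p ≡ 1 (mod 4)`:
`u[k] = exp(iθχ(k))` with `θ = arccos (1/(1+√p))`. -/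
def bjorck1 (p : ℕ) (k : ZMod p) : ℂ :=
  Complex.exp (Complex.I * (Real.arccos (1 / (1 + Real.sqrt p)) : ℂ) * chi p k)

/-- The Björck sequence of length `p` for a prime `p ≡ 3 (mod 4)`:
`u[k] = exp(iφ)` with `φ = arccos ((1-p)/(1+p))` if `k` is a quadratic nonresidue,
and `u[k] = 1` otherwise. -/
def bjorck3 (p : ℕ) (k : ZMod p) : ℂ :=
  if ∀ m : ZMod p, m ^ 2 ≠ k then
    Complex.exp (Complex.I * (Real.arccos ((1 - (p : ℝ)) / (1 + (p : ℝ))) : ℂ))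
  else 1

end

section BjorckAux

variable (p : ℕ) [hp : Fact p.Prime]

lemma Bjorck.chiZ_eq (k : ZMod p) : chiZ p k = quadraticChar (ZMod p) k := by
  have h : (∃ m : ZMod p, m ^ 2 = k) ↔ IsSquare k := by
    constructor
    · rintro ⟨m, rfl⟩; exact ⟨m, sq m⟩
    · rintro ⟨m, rfl⟩; exact ⟨m, sq m⟩
  rw [chiZ, quadraticChar_apply, quadraticCharFun]
  split_ifs with h1 h2 h3 <;> simp_all

lemma Bjorck.sum_chi_mul (hp4 : p % 4 = 3) {m : ZMod p} (hm : m ≠ 0) :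
    ∑ k : ZMod p, quadraticChar (ZMod p) (m + k) * quadraticChar (ZMod p) k = -1 := by
  have hchar : ringChar (ZMod p) ≠ 2 := by
    rw [ZMod.ringChar_zmod_n]
    omega
  set χ := quadraticChar (ZMod p) with hχ
  have step1 : ∀ k : ZMod p, χ (m + k) * χ k = χ ((m + k) * k) := fun k => (map_mul χ _ _).symm
  rw [Finset.sum_congr rfl fun k _ => step1 k]
  rw [← Finset.add_sum_erase _ _ (Finset.mem_univ (0 : ZMod p))]
  have h0 : χ ((m + 0) * 0) = 0 := by rw [mul_zero]; exact quadraticChar_zero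
  rw [h0, zero_add]
  have key : ∑ k ∈ Finset.univ.erase (0 : ZMod p), χ ((m + k) * k)
      = ∑ z ∈ Finset.univ.erase (1 : ZMod p), χ z := by
    refine Finset.sum_nbij' (fun k => 1 + m * k⁻¹) (fun z => m * (z - 1)⁻¹) ?_ ?_ ?_ ?_ ?_
    · intro k hk
      have hk0 : k ≠ 0 := Finset.ne_of_mem_erase hk
      refine Finset.mem_erase.mpr ⟨?_, Finset.mem_univ _⟩
      intro h
      have : m * k⁻¹ = 0 := by linear_combination h
      rcases mul_eq_zero.mp this with h' | h'
      · exact hm h'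
      · exact hk0 (inv_eq_zero.mp h')
    · intro z hz
      have hz1 : z ≠ 1 := Finset.ne_of_mem_erase hz
      refine Finset.mem_erase.mpr ⟨?_, Finset.mem_univ _⟩
      intro h
      rcases mul_eq_zero.mp h with h' | h'
      · exact hm h'
      · exact hz1 (by
          have := inv_eq_zero.mp h'
          have : z = 1 := by linear_combination this
          exact this)
    · intro k hk
      have hk0 : k ≠ 0 := Finset.ne_of_mem_erase hk
      field_simp
      simp [hm]
    · intro z hz
      have hz1 : z ≠ 1 := Finset.ne_of_mem_erase hz
      have h1 : z - 1 ≠ 0 := sub_ne_zero.mpr hz1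
      field_simp
      ring
    · intro k hk
      have hk0 : k ≠ 0 := Finset.ne_of_mem_erase hk
      have : (m + k) * k = k ^ 2 * (1 + m * k⁻¹) := by
        field_simp; ring
      rw [this, map_mul, quadraticChar_sq_one' hk0, one_mul]
  rw [key, Finset.sum_erase_eq_sub (Finset.mem_univ (1 : ZMod p)),
    quadraticChar_sum_zero hchar, map_one, zero_sub]

lemma Bjorck.sq_chi_eq (k : ZMod p) :
    (quadraticChar (ZMod p) k)^2 = if k = 0 then 0 else 1 := by
  split_ifs with h
  · simp [h]
  · exact quadraticChar_sq_one h

lemma Bjorck.sum_sq_chi : ∑ k : ZMod p, (quadraticChar (ZMod p) k)^2 = (p:ℤ) - 1 := by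
  rw [Finset.sum_congr rfl fun k _ => Bjorck.sq_chi_eq p k]
  have : ∀ k : ZMod p, (if k = 0 then (0:ℤ) else 1) = 1 - (if k = 0 then 1 else 0) := by
    intro k; split_ifs <;> ring
  rw [Finset.sum_congr rfl fun k _ => this k, Finset.sum_sub_distrib]
  simp [Finset.card_univ, ZMod.card]

lemma Bjorck.sum_chi_shift (m : ZMod p) :
    ∑ k : ZMod p, quadraticChar (ZMod p) (m + k) = ∑ k : ZMod p, quadraticChar (ZMod p) k :=
  Fintype.sum_equiv (Equiv.addLeft m) _ _ (fun _ => rfl)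

lemma Bjorck.sum_U2 (hp4 : p % 4 = 3) (m : ZMod p) :
    ∑ k : ZMod p, quadraticChar (ZMod p) (m + k) * (quadraticChar (ZMod p) k)^2
      = - quadraticChar (ZMod p) m := by
  have hchar : ringChar (ZMod p) ≠ 2 := by rw [ZMod.ringChar_zmod_n]; omega
  have step : ∀ k : ZMod p, quadraticChar (ZMod p) (m + k) * (quadraticChar (ZMod p) k)^2
      = quadraticChar (ZMod p) (m + k) - (if k = 0 then quadraticChar (ZMod p) m else 0) := by
    intro k
    rw [Bjorck.sq_chi_eq]
    split_ifs with h
    · simp [h]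
    · ring
  rw [Finset.sum_congr rfl fun k _ => step k, Finset.sum_sub_distrib, Bjorck.sum_chi_shift,
    quadraticChar_sum_zero hchar]
  simp

lemma Bjorck.sum_U3 (hp4 : p % 4 = 3) (m : ZMod p) :
    ∑ k : ZMod p, (quadraticChar (ZMod p) (m + k))^2 * quadraticChar (ZMod p) k
      = - quadraticChar (ZMod p) (-m) := by
  have hchar : ringChar (ZMod p) ≠ 2 := by rw [ZMod.ringChar_zmod_n]; omega
  have step : ∀ k : ZMod p, (quadraticChar (ZMod p) (m + k))^2 * quadraticChar (ZMod p) k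
      = quadraticChar (ZMod p) k - (if k = -m then quadraticChar (ZMod p) (-m) else 0) := by
    intro k
    rw [Bjorck.sq_chi_eq]
    by_cases h : m + k = 0
    · have hk : k = -m := by linear_combination h
      simp [h, hk]
    · have hk : k ≠ -m := by intro hh; exact h (by rw [hh]; ring)
      simp [h, hk]
  rw [Finset.sum_congr rfl fun k _ => step k, Finset.sum_sub_distrib,
    quadraticChar_sum_zero hchar]
  simp

lemma Bjorck.sum_U4 {m : ZMod p} (hm : m ≠ 0) :
    ∑ k : ZMod p, (quadraticChar (ZMod p) (m + k))^2 * (quadraticChar (ZMod p) k)^2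
      = (p:ℤ) - 2 := by
  have step : ∀ k : ZMod p, (quadraticChar (ZMod p) (m + k))^2 * (quadraticChar (ZMod p) k)^2
      = 1 - (if k = 0 then 1 else 0) - (if k = -m then 1 else 0) := by
    intro k
    rw [Bjorck.sq_chi_eq, Bjorck.sq_chi_eq]
    by_cases h0 : k = 0
    · have h1 : m + k ≠ 0 := by rw [h0, add_zero]; exact hm
      have h2 : k ≠ -m := by rw [h0]; intro h; exact hm (neg_eq_zero.mp h.symm)
      simp [h0, h1, h2, hm]
    · by_cases h2 : k = -m
      · have h1 : m + k = 0 := by rw [h2]; ring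
        have h3 : k ≠ 0 := h0
        simp [h1, h2, h3, hm]
      · have h1 : m + k ≠ 0 := by intro hh; exact h2 (by linear_combination hh)
        simp [h0, h1, h2]
  rw [Finset.sum_congr rfl fun k _ => step k]
  rw [Finset.sum_sub_distrib, Finset.sum_sub_distrib]
  simp [Finset.card_univ, ZMod.card]
  ring

lemma Bjorck.chi_neg_one (hp4 : p % 4 = 3) : quadraticChar (ZMod p) (-1) = -1 := by
  have hchar : ringChar (ZMod p) ≠ 2 := by rw [ZMod.ringChar_zmod_n]; omega
  rw [quadraticChar_neg_one hchar, ZMod.card p, ZMod.χ₄_nat_eq_if_mod_four]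
  have h2 : p % 2 = 1 := by omega
  simp [h2, hp4]

lemma Bjorck.chi_neg (hp4 : p % 4 = 3) (m : ZMod p) :
    quadraticChar (ZMod p) (-m) = - quadraticChar (ZMod p) m := by
  rw [show (-m : ZMod p) = -1 * m by ring, map_mul, Bjorck.chi_neg_one p hp4]
  ring

/-- Sum of `g(k) = χ(k) - χ(k)²` over `ZMod p`. -/
lemma Bjorck.sum_gZ (hp4 : p % 4 = 3) :
    ∑ k : ZMod p, (chiZ p k - (chiZ p k)^2) = 1 - (p:ℤ) := by
  have hchar : ringChar (ZMod p) ≠ 2 := by rw [ZMod.ringChar_zmod_n]; omega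
  simp only [Bjorck.chiZ_eq]
  rw [Finset.sum_sub_distrib, quadraticChar_sum_zero hchar, Bjorck.sum_sq_chi]
  ring

lemma Bjorck.sum_gZ_shift (hp4 : p % 4 = 3) (m : ZMod p) :
    ∑ k : ZMod p, (chiZ p (m + k) - (chiZ p (m + k))^2) = 1 - (p:ℤ) := by
  rw [Fintype.sum_equiv (Equiv.addLeft m)
    (fun k => (chiZ p (m + k) - (chiZ p (m + k))^2)) (fun k => (chiZ p k - (chiZ p k)^2))
    (fun x => rfl)]
  exact Bjorck.sum_gZ p hp4

lemma Bjorck.sum_gZ_mul (hp4 : p % 4 = 3) {m : ZMod p} (hm : m ≠ 0) :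
    ∑ k : ZMod p, (chiZ p (m + k) - (chiZ p (m + k))^2) * (chiZ p k - (chiZ p k)^2)
      = (p:ℤ) - 3 := by
  simp only [Bjorck.chiZ_eq]
  set χ := quadraticChar (ZMod p) with hχ
  have step : ∀ k : ZMod p, (χ (m + k) - (χ (m + k))^2) * (χ k - (χ k)^2)
      = χ (m + k) * χ k - χ (m + k) * (χ k)^2 - ((χ (m + k))^2 * χ k
        - (χ (m + k))^2 * (χ k)^2) := by
    intro k; ring
  rw [Finset.sum_congr rfl fun k _ => step k, Finset.sum_sub_distrib, Finset.sum_sub_distrib,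
    Finset.sum_sub_distrib, Bjorck.sum_chi_mul p hp4 hm, Bjorck.sum_U2 p hp4 m,
    Bjorck.sum_U3 p hp4 m, Bjorck.sum_U4 p hm, Bjorck.chi_neg p hp4 m]
  ring

end BjorckAux

theorem bjorck3_cazac (p : ℕ) [hp : Fact p.Prime] (hp4 : p % 4 = 3) :
    (∀ k : ZMod p, ‖bjorck3 p k‖ = 1) ∧
      ∀ m : ZMod p, m ≠ 0 →
        (1 / (p : ℂ)) *
          ∑ k : ZMod p, bjorck3 p (m + k) * (starRingEnd ℂ) (bjorck3 p k) = 0 := by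
  have hppos : 0 < p := hp.out.pos
  constructor
  · intro k
    rw [bjorck3]
    split_ifs with h
    · rw [Complex.norm_exp]
      simp [Complex.mul_re]
    · simp
  · intro m hm
    set θ : ℝ := Real.arccos ((1 - (p : ℝ)) / (1 + (p : ℝ))) with hθ
    set ω : ℂ := Complex.exp (Complex.I * (θ : ℂ)) with hω
    have hp0 : (p : ℂ) ≠ 0 := Nat.cast_ne_zero.mpr hppos.ne'
    have h1p : (1 : ℂ) + (p : ℂ) ≠ 0 := by
      have h := Nat.cast_ne_zero (R := ℂ).mpr (show 1 + p ≠ 0 by omega)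
      intro hcon
      apply h
      push_cast
      linear_combination hcon
    have h1pR : (0 : ℝ) < 1 + (p : ℝ) := by positivity
    have hb1 : (-1 : ℝ) ≤ (1 - (p:ℝ)) / (1 + (p:ℝ)) := by
      rw [le_div_iff₀ h1pR]
      linarith
    have hb2 : ((1:ℝ) - (p:ℝ)) / (1 + (p:ℝ)) ≤ 1 := by
      rw [div_le_one h1pR]
      linarith
    have hcos : Real.cos θ = (1 - (p:ℝ)) / (1 + (p:ℝ)) := Real.cos_arccos hb1 hb2
    have homega : ω = Complex.cos (θ : ℂ) + Complex.sin (θ : ℂ) * Complex.I := by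
      rw [hω, mul_comm, Complex.exp_mul_I]
    have hconj : (starRingEnd ℂ) ω = Complex.cos (θ : ℂ) - Complex.sin (θ : ℂ) * Complex.I := by
      rw [homega, map_add, map_mul, Complex.conj_I,
        ← Complex.ofReal_cos, ← Complex.ofReal_sin, Complex.conj_ofReal, Complex.conj_ofReal]
      ring
    have hsum : ω + (starRingEnd ℂ) ω = 2 * ((1 - (p:ℂ)) / (1 + (p:ℂ))) := by
      have h2 : ω + (starRingEnd ℂ) ω = 2 * Complex.cos (θ : ℂ) := by
        rw [hconj, homega]; ring
      rw [h2, ← Complex.ofReal_cos, hcos]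
      push_cast
      ring
    have hmul : ω * (starRingEnd ℂ) ω = 1 := by
      rw [hconj, homega]
      linear_combination Complex.cos_sq_add_sin_sq (θ : ℂ)
        - (Complex.sin (θ : ℂ))^2 * Complex.I_sq
    -- pointwise description of bjorck3
    have hbj : ∀ k : ZMod p, bjorck3 p k
        = 1 + (1 - ω) / 2 * ((chiZ p k - (chiZ p k)^2 : ℤ) : ℂ) := by
      intro k
      rw [bjorck3, chiZ, ← hθ, ← hω]
      by_cases h0 : k = 0
      · have hC : ¬(∀ m' : ZMod p, m' ^ 2 ≠ k) := by
          push_neg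
          exact ⟨0, by rw [h0]; exact zero_pow two_ne_zero⟩
        rw [if_neg hC, if_pos h0]
        push_cast; ring
      · rw [if_neg h0]
        by_cases hs : ∃ m' : ZMod p, m' ^ 2 = k
        · have hC : ¬(∀ m' : ZMod p, m' ^ 2 ≠ k) := by push_neg; exact hs
          rw [if_neg hC, if_pos hs]
          push_cast; ring
        · rw [if_pos (not_exists.mp hs), if_neg hs]
          push_cast; ring
    have hbjc : ∀ k : ZMod p, (starRingEnd ℂ) (bjorck3 p k)
        = 1 + (1 - (starRingEnd ℂ) ω) / 2 * ((chiZ p k - (chiZ p k)^2 : ℤ) : ℂ) := by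
      intro k
      rw [hbj k]
      simp only [map_add, map_mul, map_one, map_sub, map_div₀, map_ofNat, map_intCast]
    -- expand the sum
    have expand : ∀ k : ZMod p,
        bjorck3 p (m + k) * (starRingEnd ℂ) (bjorck3 p k)
          = 1 + (1 - ω) / 2 * ((chiZ p (m + k) - (chiZ p (m + k))^2 : ℤ) : ℂ)
            + (1 - (starRingEnd ℂ) ω) / 2 * ((chiZ p k - (chiZ p k)^2 : ℤ) : ℂ)
            + ((1 - ω) / 2 * ((1 - (starRingEnd ℂ) ω) / 2))
              * (((chiZ p (m + k) - (chiZ p (m + k))^2 : ℤ) : ℂ)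
                * ((chiZ p k - (chiZ p k)^2 : ℤ) : ℂ)) := by
      intro k
      rw [hbj (m + k), hbjc k]
      ring
    rw [Finset.sum_congr rfl fun k _ => expand k]
    rw [Finset.sum_add_distrib, Finset.sum_add_distrib, Finset.sum_add_distrib,
      ← Finset.mul_sum, ← Finset.mul_sum, ← Finset.mul_sum, Finset.sum_const,
      Finset.card_univ, ZMod.card]
    -- evaluate the three character sums
    have hS1 : ∑ k : ZMod p, ((chiZ p (m + k) - (chiZ p (m + k))^2 : ℤ) : ℂ)
        = 1 - (p : ℂ) := by
      rw [← Int.cast_sum, Bjorck.sum_gZ_shift p hp4 m]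
      push_cast; ring
    have hS2 : ∑ k : ZMod p, ((chiZ p k - (chiZ p k)^2 : ℤ) : ℂ) = 1 - (p : ℂ) := by
      rw [← Int.cast_sum, Bjorck.sum_gZ p hp4]
      push_cast; ring
    have hS3 : ∑ k : ZMod p, (((chiZ p (m + k) - (chiZ p (m + k))^2 : ℤ) : ℂ)
        * ((chiZ p k - (chiZ p k)^2 : ℤ) : ℂ)) = (p : ℂ) - 3 := by
      have : ∀ k : ZMod p, (((chiZ p (m + k) - (chiZ p (m + k))^2 : ℤ) : ℂ)
          * ((chiZ p k - (chiZ p k)^2 : ℤ) : ℂ))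
          = (((chiZ p (m + k) - (chiZ p (m + k))^2) * (chiZ p k - (chiZ p k)^2) : ℤ) : ℂ) := by
        intro k; push_cast; ring
      rw [Finset.sum_congr rfl fun k _ => this k, ← Int.cast_sum,
        Bjorck.sum_gZ_mul p hp4 hm]
      push_cast; ring
    rw [hS1, hS2, hS3]
    -- final algebra
    have hApB : (1 - ω) / 2 + (1 - (starRingEnd ℂ) ω) / 2 = 2 * (p:ℂ) / (1 + (p:ℂ)) := by
      have h : (1 - ω) / 2 + (1 - (starRingEnd ℂ) ω) / 2
          = 1 - (ω + (starRingEnd ℂ) ω) / 2 := by ring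
      rw [h, hsum]
      field_simp
      ring
    have hAmB : (1 - ω) / 2 * ((1 - (starRingEnd ℂ) ω) / 2) = (p:ℂ) / (1 + (p:ℂ)) := by
      have h : (1 - ω) / 2 * ((1 - (starRingEnd ℂ) ω) / 2)
          = (1 - (ω + (starRingEnd ℂ) ω) + ω * (starRingEnd ℂ) ω) / 4 := by ring
      rw [h, hsum, hmul]
      field_simp
      ring
    have key : (p : ℕ) • (1:ℂ) + (1 - ω) / 2 * (1 - (p:ℂ))
        + (1 - (starRingEnd ℂ) ω) / 2 * (1 - (p:ℂ))
        + (1 - ω) / 2 * ((1 - (starRingEnd ℂ) ω) / 2) * ((p:ℂ) - 3) = 0 := by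
      rw [nsmul_eq_mul, mul_one]
      have h : (p:ℂ) + (1 - ω) / 2 * (1 - (p:ℂ))
          + (1 - (starRingEnd ℂ) ω) / 2 * (1 - (p:ℂ))
          + (1 - ω) / 2 * ((1 - (starRingEnd ℂ) ω) / 2) * ((p:ℂ) - 3)
          = (p:ℂ) + ((1 - ω) / 2 + (1 - (starRingEnd ℂ) ω) / 2) * (1 - (p:ℂ))
            + ((1 - ω) / 2 * ((1 - (starRingEnd ℂ) ω) / 2)) * ((p:ℂ) - 3) := by ring
      rw [h, hApB, hAmB]
      field_simp
      ring
    rw [key, mul_zero]
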